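/- Let γ ≥ 1 and k ≥ 1, h ≥ 3 be integers. Suppose a sequence (c_j)_{j=0}^{k} of nonnegative reals satisfies c_0 = 0 and c_j ≤ γ c_{j-1} + (h-1)(j-1)^{h-2} γ^{h(j-1)} for 1 ≤ j ≤ k. Then c_k ≤ k^{h-1} γ^{kh}. -/
import Mathlib

lemma stmt_15_aux (x : ℝ) (hx : 0 ≤ x) (m : ℕ) :
    x ^ (m + 1) + (m + 1 : ℝ) * x ^ m ≤ (x + 1) ^ (m + 1) := by
  induction m with
  | zero => simp
  | succ n ih =>
    have hxp : 0 ≤ x ^ n := pow_nonneg hx n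
    have h1 : (x + 1) ^ (n + 2) = (x + 1) * (x + 1) ^ (n + 1) := by ring
    have h2 : (x + 1) * (x ^ (n + 1) + (n + 1 : ℝ) * x ^ n) ≤ (x + 1) * (x + 1) ^ (n + 1) :=
      mul_le_mul_of_nonneg_left ih (by linarith)
    have h3 : x ^ (n + 2) + ((n : ℝ) + 2) * x ^ (n + 1)
        ≤ (x + 1) * (x ^ (n + 1) + (n + 1 : ℝ) * x ^ n) := by
      have e1 : x ^ (n + 2) = x * (x * x ^ n) := by ring
      have e2 : x ^ (n + 1) = x * x ^ n := by ring
      rw [e1, e2]; nlinarith [mul_nonneg hx hxp]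
    push_cast
    nlinarith

/-- The inductive estimate of relation 3.43: if `c_0 = 0` and
`c_j ≤ γ c_{j-1} + (h-1)(j-1)^{h-2} γ^{h(j-1)}` for `1 ≤ j ≤ k`, with `γ ≥ 1` and
`h ≥ 3`, then `c_k ≤ k^{h-1} γ^{kh}`. -/
theorem stmt_15 (γ : ℝ) (hγ : 1 ≤ γ) (k h : ℕ) (hk : 1 ≤ k) (hh : 3 ≤ h)
    (c : ℕ → ℝ) (hc : ∀ j ≤ k, 0 ≤ c j) (h0 : c 0 = 0)
    (hrec : ∀ j : ℕ, 1 ≤ j → j ≤ k →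
      c j ≤ γ * c (j - 1) + ((h : ℝ) - 1) * ((j : ℝ) - 1) ^ (h - 2) * γ ^ (h * (j - 1))) :
    c k ≤ (k : ℝ) ^ (h - 1) * γ ^ (k * h) := by
  obtain ⟨m, rfl⟩ : ∃ m, h = m + 2 := ⟨h - 2, by omega⟩
  have hγ0 : (0:ℝ) < γ := by linarith
  -- main induction
  have main : ∀ j, j ≤ k → c j ≤ (j : ℝ) ^ (m + 1) * γ ^ (j * (m + 2)) := by
    intro j
    induction j with
    | zero => intro _; simp [h0]
    | succ n ih =>
      intro hjk
      have hnk : n ≤ k := by omega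
      have hcn := ih hnk
      have hr := hrec (n + 1) (by omega) hjk
      simp only [Nat.add_sub_cancel] at hr
      have hcast : ((n + 1 : ℕ) : ℝ) - 1 = (n : ℝ) := by push_cast; ring
      rw [hcast] at hr
      have hn0 : (0:ℝ) ≤ (n : ℝ) := Nat.cast_nonneg n
      have he : (n + 1) * (m + 2) = n * (m + 2) + (m + 2) := by ring
      have hpow1 : γ ^ (n * (m + 2) + 1) ≤ γ ^ ((n + 1) * (m + 2)) :=
        pow_le_pow_right₀ hγ (by rw [he]; linarith)
      have hpow2 : γ ^ ((m + 2) * n) ≤ γ ^ ((n + 1) * (m + 2)) :=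
        pow_le_pow_right₀ hγ (by rw [he, mul_comm (m+2) n]; linarith)
      have hγp : 0 ≤ γ ^ ((n + 1) * (m + 2)) := by positivity
      have hcoef : ((m + 2 : ℕ) : ℝ) - 1 = (m : ℝ) + 1 := by push_cast; ring
      rw [hcoef] at hr
      -- bound the two terms
      have t1 : γ * c n ≤ (n : ℝ) ^ (m + 1) * γ ^ ((n + 1) * (m + 2)) := by
        calc γ * c n ≤ γ * ((n : ℝ) ^ (m + 1) * γ ^ (n * (m + 2))) :=
              mul_le_mul_of_nonneg_left hcn (by linarith)
          _ = (n : ℝ) ^ (m + 1) * γ ^ (n * (m + 2) + 1) := by ring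
          _ ≤ (n : ℝ) ^ (m + 1) * γ ^ ((n + 1) * (m + 2)) :=
              mul_le_mul_of_nonneg_left hpow1 (by positivity)
      have t2 : ((m : ℝ) + 1) * (n : ℝ) ^ m * γ ^ ((m + 2) * n)
          ≤ ((m : ℝ) + 1) * (n : ℝ) ^ m * γ ^ ((n + 1) * (m + 2)) :=
        mul_le_mul_of_nonneg_left hpow2 (by positivity)
      have key := stmt_15_aux (n : ℝ) hn0 m
      have : c (n + 1) ≤ ((n : ℝ) ^ (m + 1) + ((m : ℝ) + 1) * (n : ℝ) ^ m)
          * γ ^ ((n + 1) * (m + 2)) := by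
        push_cast at t2 ⊢
        nlinarith [hr, t1, t2]
      calc c (n + 1) ≤ _ := this
        _ ≤ ((n : ℝ) + 1) ^ (m + 1) * γ ^ ((n + 1) * (m + 2)) := by
            apply mul_le_mul_of_nonneg_right _ hγp
            push_cast
            exact key
        _ = ((n + 1 : ℕ) : ℝ) ^ (m + 1) * γ ^ ((n + 1) * (m + 2)) := by push_cast; ring
  have := main k le_rfl
  have hmn1 : (m + 2) - 1 = m + 1 := by omega
  rw [hmn1]
  exact this
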